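/- Let T be an ℝ^m-valued unbiased estimator at θ (E_θ[T] = θ and the Jacobian ∂_j E_θ[Tⁱ] = δⁱⱼ) for a classical statistical model {p_θ} with nonsingular Fisher information matrix J_θ. Then the covariance matrix of T satisfies V_θ[T] ≥ J_θ⁻¹ in the Löwner order (Cramér–Rao inequality). -/

import Mathlib

open MeasureTheory Matrix

private lemma mulL2 {Ω : Type*} [MeasurableSpace Ω] {P : Measure Ω} {f g : Ω → ℝ}
    (hf : MemLp f 2 P) (hg : MemLp g 2 P) : Integrable (fun ω => f ω * g ω) P :=
  memLp_one_iff_integrable.mp (hg.smul hf (r := 1))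

/-- Cramér–Rao inequality: if `T` is locally unbiased at `θ` (mean `θ` and covariance with
the scores equal to the identity) and the Fisher information matrix `J` is nonsingular,
then `V_θ[T] ≥ J⁻¹` in the Löwner order. -/
theorem cramer_rao {Ω : Type*} [MeasurableSpace Ω] (P : Measure Ω)
    [IsProbabilityMeasure P] {m : ℕ} (θ : Fin m → ℝ) (T l : Fin m → Ω → ℝ)
    (hT : ∀ i, MemLp (T i) 2 P) (hl : ∀ i, MemLp (l i) 2 P)
    (hscore0 : ∀ i, ∫ ω, l i ω ∂P = 0)
    (hunbiased : ∀ i, ∫ ω, T i ω ∂P = θ i)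
    (hlocunb : ∀ i j, ∫ ω, T i ω * l j ω ∂P = if i = j then 1 else 0)
    (J : Matrix (Fin m) (Fin m) ℝ)
    (hJ : J = Matrix.of fun i j => ∫ ω, l i ω * l j ω ∂P)
    (hJinv : IsUnit J.det) :
    ((Matrix.of fun i j => ∫ ω, (T i ω - θ i) * (T j ω - θ j) ∂P) - J⁻¹).PosSemidef := by
  classical
  set K : Matrix (Fin m) (Fin m) ℝ := J⁻¹ with hK
  -- J is symmetric, hence so is K
  have hJsymm : Jᵀ = J := by
    rw [hJ]; ext i j; simp only [Matrix.transpose_apply, Matrix.of_apply]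
    simp_rw [mul_comm]
  have hKsymm : ∀ i j, K i j = K j i := by
    intro i j
    have : Kᵀ = K := by rw [hK, Matrix.transpose_nonsing_inv, hJsymm]
    calc K i j = Kᵀ j i := rfl
    _ = K j i := by rw [this]
  have hKJ : ∀ i k', (∑ k, K i k * J k k') = if i = k' then 1 else 0 := by
    intro i k'
    have h := Matrix.nonsing_inv_mul J hJinv
    have := congrFun (congrFun h i) k'
    simpa [Matrix.mul_apply, Matrix.one_apply] using this
  -- centered estimator and residual
  set A : Fin m → Ω → ℝ := fun i ω => T i ω - θ i with hA
  set R : Fin m → Ω → ℝ := fun i ω => A i ω - ∑ k, K i k * l k ω with hR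
  have hAmem : ∀ i, MemLp (A i) 2 P := fun i => (hT i).sub (memLp_const (θ i))
  have hRmem : ∀ i, MemLp (R i) 2 P := fun i =>
    (hAmem i).sub (memLp_finset_sum _ fun k _ => (hl k).const_mul (K i k))
  have hlint : ∀ k, Integrable (l k) P := fun k => (hl k).integrable (by norm_num)
  -- E[A i * l k] = δ i k
  have hAl : ∀ i k, ∫ ω, A i ω * l k ω ∂P = if i = k then 1 else 0 := by
    intro i k
    have : ∀ ω, A i ω * l k ω = T i ω * l k ω - θ i * l k ω := by
      intro ω; simp [hA]; ring
    simp_rw [this]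
    rw [integral_sub (mulL2 (hT i) (hl k)) ((hlint k).const_mul (θ i)),
      integral_const_mul, hscore0, hlocunb]
    ring
  -- E[l k * l k'] = J k k'
  have hll : ∀ k k', ∫ ω, l k ω * l k' ω ∂P = J k k' := by
    intro k k'; rw [hJ]; rfl
  -- the key identity : E[R i * R j] = V i j - K i j
  have key : ∀ i j, ∫ ω, R i ω * R j ω ∂P = (∫ ω, A i ω * A j ω ∂P) - K i j := by
    intro i j
    have expand : ∀ ω, R i ω * R j ω =
        A i ω * A j ω - (∑ k, K j k * (A i ω * l k ω))
          - (∑ k, K i k * (A j ω * l k ω))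
          + ∑ k, ∑ k', (K i k * K j k') * (l k ω * l k' ω) := by
      intro ω
      have h1 : (∑ k, K i k * l k ω) * A j ω = ∑ k, K i k * (A j ω * l k ω) := by
        rw [Finset.sum_mul]; exact Finset.sum_congr rfl fun k _ => by ring
      have h2 : A i ω * (∑ k, K j k * l k ω) = ∑ k, K j k * (A i ω * l k ω) := by
        rw [Finset.mul_sum]; exact Finset.sum_congr rfl fun k _ => by ring
      have h3 : (∑ k, K i k * l k ω) * (∑ k', K j k' * l k' ω)
          = ∑ k, ∑ k', (K i k * K j k') * (l k ω * l k' ω) := by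
        rw [Finset.sum_mul_sum]
        exact Finset.sum_congr rfl fun k _ => Finset.sum_congr rfl fun k' _ => by ring
      calc R i ω * R j ω
          = A i ω * A j ω - A i ω * (∑ k, K j k * l k ω) - (∑ k, K i k * l k ω) * A j ω
            + (∑ k, K i k * l k ω) * (∑ k', K j k' * l k' ω) := by simp only [hR]; ring
        _ = _ := by rw [h1, h2, h3]
    simp_rw [expand]
    have i1 : Integrable (fun ω => A i ω * A j ω) P := mulL2 (hAmem i) (hAmem j)
    have i2 : Integrable (fun ω => ∑ k, K j k * (A i ω * l k ω)) P :=
      integrable_finset_sum _ fun k _ => (mulL2 (hAmem i) (hl k)).const_mul _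
    have i3 : Integrable (fun ω => ∑ k, K i k * (A j ω * l k ω)) P :=
      integrable_finset_sum _ fun k _ => (mulL2 (hAmem j) (hl k)).const_mul _
    have i4 : Integrable (fun ω => ∑ k, ∑ k', (K i k * K j k') * (l k ω * l k' ω)) P :=
      integrable_finset_sum _ fun k _ =>
        integrable_finset_sum _ fun k' _ => (mulL2 (hl k) (hl k')).const_mul _
    have i12 : Integrable (fun ω => A i ω * A j ω - ∑ k, K j k * (A i ω * l k ω)) P := i1.sub i2
    have i123 : Integrable (fun ω => A i ω * A j ω - (∑ k, K j k * (A i ω * l k ω))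
        - ∑ k, K i k * (A j ω * l k ω)) P := i12.sub i3
    rw [integral_add i123 i4, integral_sub i12 i3, integral_sub i1 i2,
      integral_finset_sum _ fun k _ => (mulL2 (hAmem i) (hl k)).const_mul _,
      integral_finset_sum _ fun k _ => (mulL2 (hAmem j) (hl k)).const_mul _,
      integral_finset_sum _ fun k _ =>
        integrable_finset_sum _ fun k' _ => (mulL2 (hl k) (hl k')).const_mul _]
    simp_rw [integral_finset_sum _ fun k' _ => (mulL2 (hl _) (hl k')).const_mul _,
      integral_const_mul, hAl, hll]
    have s2 : (∑ k, K j k * if i = k then 1 else 0) = K i j := by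
      simp [mul_ite, Finset.sum_ite_eq, hKsymm i j]
    have s3 : (∑ k, K i k * if j = k then 1 else 0) = K i j := by
      simp [mul_ite, Finset.sum_ite_eq]
    have s4 : (∑ k, ∑ k', K i k * K j k' * J k k') = K i j := by
      rw [Finset.sum_comm]
      have : ∀ k', (∑ k, K i k * K j k' * J k k') = K j k' * (if i = k' then 1 else 0) := by
        intro k'
        rw [← hKJ i k', Finset.mul_sum]
        exact Finset.sum_congr rfl fun k _ => by ring
      simp_rw [this]
      simp [mul_ite, Finset.sum_ite_eq, hKsymm i j]
    rw [s2, s3, s4]; ring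
  -- entries of the goal matrix
  have entry : ∀ i j,
      ((Matrix.of fun i j => ∫ ω, (T i ω - θ i) * (T j ω - θ j) ∂P) - J⁻¹) i j
        = ∫ ω, R i ω * R j ω ∂P := by
    intro i j
    rw [key i j]; rfl
  rw [Matrix.posSemidef_iff_dotProduct_mulVec]
  constructor
  · -- Hermitian
    ext i j
    simp only [Matrix.conjTranspose_apply, star_trivial]
    rw [entry i j, entry j i]
    simp_rw [mul_comm]
  · -- positivity
    intro x
    have ptw : ∀ ω, (∑ i, x i * R i ω) ^ 2 = ∑ i, ∑ j, (x i * x j) * (R i ω * R j ω) := by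
      intro ω
      rw [sq, Finset.sum_mul_sum]
      exact Finset.sum_congr rfl fun i _ => Finset.sum_congr rfl fun j _ => by ring
    have rhs : ∫ ω, (∑ i, x i * R i ω) ^ 2 ∂P
        = ∑ i, ∑ j, (x i * x j) * ∫ ω, R i ω * R j ω ∂P := by
      simp_rw [ptw]
      rw [integral_finset_sum _ fun i _ =>
        integrable_finset_sum _ fun j _ => (mulL2 (hRmem i) (hRmem j)).const_mul _]
      exact Finset.sum_congr rfl fun i _ => by
        rw [integral_finset_sum _ fun j _ => (mulL2 (hRmem i) (hRmem j)).const_mul _]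
        exact Finset.sum_congr rfl fun j _ => integral_const_mul _ _
    have lhs : (star x) ⬝ᵥ
        (((Matrix.of fun i j => ∫ ω, (T i ω - θ i) * (T j ω - θ j) ∂P) - J⁻¹) *ᵥ x)
        = ∑ i, ∑ j, (x i * x j) * ∫ ω, R i ω * R j ω ∂P := by
      simp only [star_trivial, dotProduct, Matrix.mulVec]
      exact Finset.sum_congr rfl fun i _ => by
        rw [Finset.mul_sum]
        exact Finset.sum_congr rfl fun j _ => by rw [entry i j]; ring
    rw [lhs, ← rhs]
    exact integral_nonneg fun ω => sq_nonneg _
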